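/- Let S be a finite set of stochastic matrices whose shortest SIA product has length ℓ. Then there is a Lyndon word of length ℓ over the alphabet S whose corresponding product is SIA. -/

import Mathlib

open Matrix Finset
open scoped Classical

def Stochastic {n : ℕ} (P : Matrix (Fin n) (Fin n) ℝ) : Prop :=
  (∀ i j, 0 ≤ P i j) ∧ ∀ i, ∑ j, P i j = 1

def PosColumn {n : ℕ} (M : Matrix (Fin n) (Fin n) ℝ) : Prop :=
  ∃ j, ∀ i, 0 < M i j

def IsSIA {n : ℕ} (P : Matrix (Fin n) (Fin n) ℝ) : Prop :=
  ∃ p : ℕ, 0 < p ∧ PosColumn (P ^ p)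

def Scrambling {n : ℕ} (M : Matrix (Fin n) (Fin n) ℝ) : Prop :=
  ∀ i i', ∃ k, 0 < M i k ∧ 0 < M i' k

noncomputable def conseq {n : ℕ} (M : Matrix (Fin n) (Fin n) ℝ) (S : Finset (Fin n)) :
    Finset (Fin n) :=
  Finset.univ.filter (fun j => ∃ i ∈ S, 0 < M i j)

def Sarymsakov {n : ℕ} (M : Matrix (Fin n) (Fin n) ℝ) : Prop :=
  ∀ S S' : Finset (Fin n), S.Nonempty → S'.Nonempty → Disjoint S S' →
    (conseq M S ∩ conseq M S').Nonempty ∨ (S ∪ S').card < (conseq M S ∪ conseq M S').card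

def AutomatonMatrix {n : ℕ} (P : Matrix (Fin n) (Fin n) ℝ) : Prop :=
  (∀ i j, P i j = 0 ∨ P i j = 1) ∧ ∀ i, ∃! j, P i j = 1

-- auxiliary lemmas
lemma stoch_one {n : ℕ} : Stochastic (1 : Matrix (Fin n) (Fin n) ℝ) := by
  constructor
  · intro i j; by_cases h : i = j <;> simp [Matrix.one_apply, h]
  · intro i; simp [Matrix.one_apply]

lemma stoch_mul {n : ℕ} {A B : Matrix (Fin n) (Fin n) ℝ} (hA : Stochastic A)
    (hB : Stochastic B) : Stochastic (A * B) := by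
  constructor
  · intro i j
    rw [Matrix.mul_apply]
    exact Finset.sum_nonneg fun k _ => mul_nonneg (hA.1 i k) (hB.1 k j)
  · intro i
    simp only [Matrix.mul_apply]
    rw [Finset.sum_comm]
    simp_rw [← Finset.mul_sum]
    simp [hB.2, hA.2 i]

lemma stoch_prod {n : ℕ} {α : Type*} (f : α → Matrix (Fin n) (Fin n) ℝ)
    (hf : ∀ a, Stochastic (f a)) (w : List α) : Stochastic (w.map f).prod := by
  induction w with
  | nil => simpa using stoch_one
  | cons a l ih => simpa using stoch_mul (hf a) ih

lemma stoch_pow {n : ℕ} {A : Matrix (Fin n) (Fin n) ℝ} (hA : Stochastic A) (k : ℕ) :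
    Stochastic (A ^ k) := by
  induction k with
  | zero => simpa using stoch_one
  | succ k ih => rw [pow_succ]; exact stoch_mul ih hA

lemma row_pos {n : ℕ} {A : Matrix (Fin n) (Fin n) ℝ} (hA : Stochastic A) (i : Fin n) :
    ∃ k, 0 < A i k := by
  by_contra h
  push_neg at h
  have hz : ∀ k, A i k = 0 := fun k => le_antisymm (h k) (hA.1 i k)
  have hs := hA.2 i
  simp [hz] at hs

lemma posColumn_mul_left {n : ℕ} {A M : Matrix (Fin n) (Fin n) ℝ} (hA : Stochastic A)
    (hM : Stochastic M) (h : PosColumn M) : PosColumn (A * M) := by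
  obtain ⟨j, hj⟩ := h
  refine ⟨j, fun i => ?_⟩
  rw [Matrix.mul_apply]
  obtain ⟨k, hk⟩ := row_pos hA i
  exact Finset.sum_pos' (fun k _ => mul_nonneg (hA.1 i k) (hM.1 k j))
    ⟨k, Finset.mem_univ k, mul_pos hk (hj k)⟩

lemma posColumn_mul_right {n : ℕ} {B M : Matrix (Fin n) (Fin n) ℝ} (hB : Stochastic B)
    (hM : Stochastic M) (h : PosColumn M) : PosColumn (M * B) := by
  obtain ⟨j, hj⟩ := h
  obtain ⟨j', hj'⟩ := row_pos hB j
  refine ⟨j', fun i => ?_⟩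
  rw [Matrix.mul_apply]
  exact Finset.sum_pos' (fun k _ => mul_nonneg (hM.1 i k) (hB.1 k j'))
    ⟨j, Finset.mem_univ j, mul_pos (hj i) hj'⟩

lemma pow_shift {n : ℕ} (A B : Matrix (Fin n) (Fin n) ℝ) (p : ℕ) :
    (A * B) ^ (p + 1) = A * (B * A) ^ p * B := by
  induction p with
  | zero => simp
  | succ p ih =>
      rw [pow_succ, ih, pow_succ]
      noncomm_ring

lemma sia_swap {n : ℕ} {A B : Matrix (Fin n) (Fin n) ℝ} (hA : Stochastic A)
    (hB : Stochastic B) (h : IsSIA (B * A)) : IsSIA (A * B) := by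
  obtain ⟨p, hp, hcol⟩ := h
  refine ⟨p + 1, Nat.succ_pos _, ?_⟩
  rw [pow_shift]
  have hBA : Stochastic ((B * A) ^ p) := stoch_pow (stoch_mul hB hA) p
  exact posColumn_mul_right hB (stoch_mul hA hBA) (posColumn_mul_left hA hBA hcol)

lemma sia_root {n : ℕ} {A : Matrix (Fin n) (Fin n) ℝ} {t : ℕ}
    (h : IsSIA (A ^ t)) (ht : 0 < t) : IsSIA A := by
  obtain ⟨p, hp, hcol⟩ := h
  exact ⟨t * p, Nat.mul_pos ht hp, by rwa [pow_mul]⟩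

-- commuting words
lemma comm_words_aux {α : Type*} : ∀ N : ℕ, ∀ u v : List α, u.length + v.length = N →
    u ++ v = v ++ u →
    ∃ (z : List α) (i j : ℕ), u = (List.replicate i z).flatten ∧ v = (List.replicate j z).flatten := by
  intro N
  induction N using Nat.strong_induction_on with
  | _ N ih =>
    intro u v hn h
    subst hn
    rcases eq_or_ne u [] with rfl | hu
    · exact ⟨v, 0, 1, by simp, by simp⟩
    rcases le_or_gt u.length v.length with hle | hlt
    · have hpre : u <+: v := by
        have h1 : u <+: v ++ u := by rw [← h]; exact List.prefix_append u v
        exact List.prefix_of_prefix_length_le h1 (List.prefix_append v u) hle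
      obtain ⟨v', rfl⟩ := hpre
      have h' : u ++ v' = v' ++ u := by
        have := h
        rw [List.append_assoc] at this
        exact List.append_cancel_left this
      have hlen : u.length + v'.length < u.length + (u ++ v').length := by
        simp [List.length_append]
        exact List.length_pos_iff.mpr hu
      obtain ⟨z, i, j, hz1, hz2⟩ := ih _ hlen u v' rfl h'
      exact ⟨z, i, i + j, hz1, by
        rw [hz1, hz2, ← List.flatten_append, ← List.replicate_add]⟩
    · have h' : v ++ u = u ++ v := h.symm
      rcases eq_or_ne v [] with rfl | hv
      · exact ⟨u, 1, 0, by simp, by simp⟩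
      have hpre : v <+: u := by
        have h1 : v <+: u ++ v := by rw [← h']; exact List.prefix_append v u
        exact List.prefix_of_prefix_length_le h1 (List.prefix_append u v) hlt.le
      obtain ⟨u', rfl⟩ := hpre
      have h'' : v ++ u' = u' ++ v := by
        have := h'
        rw [List.append_assoc] at this
        exact List.append_cancel_left this
      have hlen : v.length + u'.length < (v ++ u').length + v.length := by
        simp [List.length_append]
        exact List.length_pos_iff.mpr hv
      obtain ⟨z, i, j, hz1, hz2⟩ := ih _ hlen v u' rfl h''
      exact ⟨z, i + j, i, by rw [hz1, hz2, ← List.flatten_append, ← List.replicate_add], hz1⟩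

lemma comm_words {α : Type*} (u v : List α) (h : u ++ v = v ++ u) :
    ∃ (z : List α) (i j : ℕ), u = (List.replicate i z).flatten ∧ v = (List.replicate j z).flatten :=
  comm_words_aux _ u v rfl h

lemma jr_length {α : Type*} (z : List α) (k : ℕ) :
    ((List.replicate k z).flatten).length = k * z.length := by
  induction k with
  | zero => simp
  | succ k ih => simp [List.replicate_succ, ih, Nat.succ_mul]; ring

lemma jr_prod {n : ℕ} {α : Type*} (f : α → Matrix (Fin n) (Fin n) ℝ) (z : List α) (k : ℕ) :
    (((List.replicate k z).flatten).map f).prod = ((z.map f).prod) ^ k := by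
  induction k with
  | zero => simp
  | succ k ih => simp [List.replicate_succ, ih, pow_succ']


theorem stmt15 {n : ℕ} {α : Type*} [LinearOrder α]
    (f : α → Matrix (Fin n) (Fin n) ℝ) (hf : ∀ a, Stochastic (f a)) (ℓ : ℕ)
    (hex : ∃ w : List α, w ≠ [] ∧ w.length = ℓ ∧ IsSIA (w.map f).prod)
    (hmin : ∀ w : List α, w ≠ [] → IsSIA (w.map f).prod → ℓ ≤ w.length) :
    ∃ w : List α, w.length = ℓ ∧ IsSIA (w.map f).prod ∧ w ≠ [] ∧
      ∀ u v : List α, w = u ++ v → u ≠ [] → v ≠ [] → w < v ++ u := by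
  obtain ⟨w, hw0, hwl, hws⟩ := hex
  have hℓ : 0 < ℓ := hwl ▸ List.length_pos_iff.mpr hw0
  set T : Finset (List α) := (Finset.range ℓ).image (fun r => w.rotate r) with hT
  have hTne : T.Nonempty := ⟨w.rotate 0, Finset.mem_image.mpr ⟨0, Finset.mem_range.mpr hℓ, rfl⟩⟩
  -- properties of members
  have hmem : ∀ l ∈ T, l.length = ℓ ∧ IsSIA (l.map f).prod := by
    intro l hl
    obtain ⟨r, hr, rfl⟩ := Finset.mem_image.mp hl
    constructor
    · simp [hwl]
    · have hrle : r ≤ w.length := by rw [hwl]; exact (Finset.mem_range.mp hr).le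
      rw [List.rotate_eq_drop_append_take hrle]
      have hsia : IsSIA (((w.take r).map f).prod * ((w.drop r).map f).prod) := by
        have : w = w.take r ++ w.drop r := (List.take_append_drop r w).symm
        rw [this] at hws
        simpa using hws
      have := sia_swap (stoch_prod f hf (w.drop r)) (stoch_prod f hf (w.take r)) hsia
      simpa using this
  have hclosed : ∀ l ∈ T, ∀ m : ℕ, l.rotate m ∈ T := by
    intro l hl m
    obtain ⟨r, _, rfl⟩ := Finset.mem_image.mp hl
    rw [List.rotate_rotate]
    have : w.rotate (r + m) = w.rotate ((r + m) % ℓ) := by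
      conv_rhs => rw [← hwl]
      rw [List.rotate_mod]
    rw [this]
    exact Finset.mem_image.mpr ⟨(r + m) % ℓ, Finset.mem_range.mpr (Nat.mod_lt _ hℓ), rfl⟩
  set w' := T.min' hTne with hw'
  have hw'T : w' ∈ T := T.min'_mem hTne
  obtain ⟨hw'l, hw's⟩ := hmem w' hw'T
  have hw'ne : w' ≠ [] := by
    intro h; rw [h] at hw'l; simp at hw'l; omega
  refine ⟨w', hw'l, hw's, hw'ne, ?_⟩
  intro u v huv hu hv
  have hrot : v ++ u = w'.rotate u.length := by
    rw [huv, List.rotate_eq_drop_append_take (by simp)]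
    rw [List.drop_left, List.take_left]
  have hmem' : v ++ u ∈ T := hrot ▸ hclosed w' hw'T u.length
  have hle : w' ≤ v ++ u := T.min'_le _ hmem'
  rcases lt_or_eq_of_le hle with h | h
  · exact h
  · exfalso
    have hcomm : u ++ v = v ++ u := by rw [← huv, h]
    obtain ⟨z, i, j, hzi, hzj⟩ := comm_words u v hcomm
    have hwz : w' = (List.replicate (i + j) z).flatten := by
      rw [huv, hzi, hzj, ← List.flatten_append, ← List.replicate_add]
    have hzlen : (i + j) * z.length = ℓ := by
      have := hw'l
      rw [hwz, jr_length] at this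
      exact this
    have hi : 0 < i ∧ 0 < z.length := by
      have hp : 0 < u.length := List.length_pos_iff.mpr hu
      rw [hzi, jr_length] at hp
      constructor
      · rcases Nat.eq_zero_or_pos i with h0 | h0
        · rw [h0] at hp; simp at hp
        · exact h0
      · rcases Nat.eq_zero_or_pos z.length with h0 | h0
        · rw [h0] at hp; simp at hp
        · exact h0
    have hj : 0 < j := by
      have hp : 0 < v.length := List.length_pos_iff.mpr hv
      rw [hzj, jr_length] at hp
      rcases Nat.eq_zero_or_pos j with h0 | h0
      · rw [h0] at hp; simp at hp
      · exact h0
    have hzs : IsSIA (z.map f).prod := by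
      apply sia_root (t := i + j) _ (by omega)
      rw [← jr_prod, ← hwz]; exact hw's
    have := hmin z (by intro hz; rw [hz] at hi; simp at hi) hzs
    have h2 : z.length < ℓ := by
      rw [← hzlen]
      have : 2 ≤ i + j := by omega
      nlinarith [hi.2]
    omega
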